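/- Suppose there exist constants M ≥ 0 and α < (1/2)·λ·min_k p(k) such that F(k,u) ≤ α u² for all k ∈ Z[1,N] and all |u| > M, where min_k p(k) > 0. Then J is coercive on E: J(x) → +∞ as ‖x‖ → ∞. -/

import Mathlib

open Finset

/-- forward difference operator -/
def dd (x : ℤ → ℝ) : ℤ → ℝ := fun i => x (i + 1) - x i

/-- extension of `v : Fin N → ℝ` to a function on `ℤ` supported on `Z[1,N]`
(thus vanishing on `Z[1-n,0] ∪ Z[N+1,N+n]`); this realizes the space `E`. -/
noncomputable def extendE (N : ℕ) (v : Fin N → ℝ) : ℤ → ℝ := fun i =>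
  if h : 0 ≤ i - 1 ∧ (i - 1).toNat < N then v ⟨(i - 1).toNat, h.2⟩ else 0

/-- the norm of the space `E`: `‖x‖ = (∑_{k=1}^N x(k)²)^{1/2}` -/
noncomputable def normE (N : ℕ) (v : Fin N → ℝ) : ℝ :=
  Real.sqrt (∑ k ∈ Finset.Icc (1 : ℤ) (N : ℤ), (extendE N v k) ^ 2)

/-- `F(k,s) = ∫₀ˢ f(k,t) dt` -/
noncomputable def Ffun (f : ℤ → ℝ → ℝ) (k : ℤ) (s : ℝ) : ℝ := ∫ t in (0 : ℝ)..s, f k t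

/-- the action functional `J` -/
noncomputable def Jfun (n N : ℕ) (p : ℤ → ℝ) (F : ℤ → ℝ → ℝ) (v : Fin N → ℝ) : ℝ :=
  ∑ k ∈ Finset.Icc (1 - (n : ℤ)) (N : ℤ),
    ((1 / 2 : ℝ) * p k * (dd^[n] (extendE N v) k) ^ 2 - F k (extendE N v k))

/-- `v` solves the discrete BVP
`Δⁿ(p(k-n)Δⁿx(k-n)) + (-1)^{n+1} f(k,x(k)) = 0`, `k ∈ Z[1,N]`,
with the Dirichlet boundary conditions built into `extendE`. -/
def Solves (n N : ℕ) (p : ℤ → ℝ) (f : ℤ → ℝ → ℝ) (v : Fin N → ℝ) : Prop :=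
  ∀ k ∈ Finset.Icc (1 : ℤ) (N : ℤ),
    dd^[n] (fun j => p j * dd^[n] (extendE N v) j) (k - n)
      + (-1 : ℝ) ^ (n + 1) * f k (extendE N v k) = 0

/-- coercivity: `J(x) → +∞` as `‖x‖ → ∞` -/
def CoerciveE (N : ℕ) (J : (Fin N → ℝ) → ℝ) : Prop :=
  ∀ C : ℝ, ∃ R : ℝ, ∀ v : Fin N → ℝ, R ≤ normE N v → C ≤ J v

/-- anti-coercivity: `J(x) → −∞` as `‖x‖ → ∞` -/
def AntiCoerciveE (N : ℕ) (J : (Fin N → ℝ) → ℝ) : Prop :=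
  ∀ C : ℝ, ∃ R : ℝ, ∀ v : Fin N → ℝ, R ≤ normE N v → J v ≤ C


lemma extendE_zero' (N : ℕ) (v : Fin N → ℝ) (k : ℤ)
    (hk : k ∉ Finset.Icc (1 : ℤ) (N : ℤ)) : extendE N v k = 0 := by
  unfold extendE
  rw [dif_neg]
  rintro ⟨h1, h2⟩
  exact hk (by simp only [Finset.mem_Icc]; omega)

theorem stmt7 (n N : ℕ) (hn : 1 ≤ n) (hN : 2 ≤ N) (p : ℤ → ℝ)
    (F : ℤ → ℝ → ℝ) (hF : ∀ k, Continuous (F k))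
    (lam : ℝ) (hlam : 0 < lam)
    (hpoin : ∀ v : Fin N → ℝ,
      lam * ∑ k ∈ Finset.Icc (1 : ℤ) (N : ℤ), (extendE N v k) ^ 2
        ≤ ∑ k ∈ Finset.Icc (1 - (n : ℤ)) (N : ℤ), (dd^[n] (extendE N v) k) ^ 2)
    (pmin : ℝ) (hpmin : 0 < pmin)
    (hp : ∀ k ∈ Finset.Icc (1 - (n : ℤ)) (N : ℤ), pmin ≤ p k)
    (M α : ℝ) (hM : 0 ≤ M) (hα : α < (1 / 2 : ℝ) * lam * pmin)
    (hFle : ∀ k ∈ Finset.Icc (1 : ℤ) (N : ℤ), ∀ u : ℝ, M < |u| → F k u ≤ α * u ^ 2) :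
    CoerciveE N (Jfun n N p F) := by
  have key : ∀ k : ℤ, ∃ B : ℝ, ∀ v : Fin N → ℝ,
      F k (extendE N v k) ≤ α * (extendE N v k) ^ 2 + B := by
    intro k
    by_cases hk : k ∈ Finset.Icc (1 : ℤ) (N : ℤ)
    · have hc : ContinuousOn (fun u : ℝ => F k u - α * u ^ 2) (Set.Icc (-M) M) :=
        ((hF k).sub (by continuity)).continuousOn
      obtain ⟨B, hB⟩ := IsCompact.exists_bound_of_continuousOn isCompact_Icc hc
      refine ⟨max B 0, fun v => ?_⟩
      set u := extendE N v k with hu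
      by_cases hules : |u| ≤ M
      · have h1 := hB u (Set.mem_Icc.mpr (abs_le.mp hules))
        have h2 : F k u - α * u ^ 2 ≤ B := by
          calc F k u - α * u ^ 2 ≤ ‖F k u - α * u ^ 2‖ := le_abs_self _
          _ ≤ B := h1
        have := le_max_left B (0:ℝ)
        linarith
      · have h3 := hFle k hk u (lt_of_not_ge hules)
        have := le_max_right B (0:ℝ)
        linarith
    · refine ⟨F k 0, fun v => ?_⟩
      rw [extendE_zero' N v k hk]
      simp
  choose B hB using key
  obtain ⟨c, hcdef⟩ : ∃ c : ℝ, c = (1 / 2 : ℝ) * lam * pmin - α := ⟨_, rfl⟩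
  have hc : 0 < c := by rw [hcdef]; linarith
  obtain ⟨C0, hC0⟩ : ∃ C0 : ℝ, C0 = ∑ k ∈ Finset.Icc (1 - (n : ℤ)) (N : ℤ), B k := ⟨_, rfl⟩
  intro C
  refine ⟨Real.sqrt (max ((C + C0) / c) 0), fun v hv => ?_⟩
  obtain ⟨S, hSdef⟩ : ∃ S : ℝ, S = ∑ k ∈ Finset.Icc (1 : ℤ) (N : ℤ), (extendE N v k) ^ 2 := ⟨_, rfl⟩
  have hS0 : 0 ≤ S := hSdef ▸ Finset.sum_nonneg fun k _ => sq_nonneg _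
  have hnorm : normE N v = Real.sqrt S := by rw [normE, hSdef]
  have hsq : max ((C + C0) / c) 0 ≤ S := by
    have h1 : Real.sqrt (max ((C + C0) / c) 0) ^ 2 ≤ Real.sqrt S ^ 2 :=
      pow_le_pow_left₀ (Real.sqrt_nonneg _) (hnorm ▸ hv) 2
    rwa [Real.sq_sqrt (le_max_right _ _), Real.sq_sqrt hS0] at h1
  have hCS : C + C0 ≤ c * S := by
    have := le_trans (le_max_left _ _) hsq
    calc C + C0 = ((C + C0) / c) * c := by field_simp
    _ ≤ S * c := by apply mul_le_mul_of_nonneg_right this (le_of_lt hc)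
    _ = c * S := mul_comm _ _
  -- lower bound for J
  set D : ℤ → ℝ := dd^[n] (extendE N v) with hD
  obtain ⟨T, hT⟩ : ∃ T : ℝ, T = ∑ k ∈ Finset.Icc (1 - (n : ℤ)) (N : ℤ), (D k) ^ 2 := ⟨_, rfl⟩
  have hTS : lam * S ≤ T := by rw [hSdef, hT]; exact hpoin v
  have hsub : Finset.Icc (1 : ℤ) (N : ℤ) ⊆ Finset.Icc (1 - (n : ℤ)) (N : ℤ) := by
    intro k hk
    simp only [Finset.mem_Icc] at hk ⊢
    omega
  have hxsum : ∑ k ∈ Finset.Icc (1 - (n : ℤ)) (N : ℤ), α * (extendE N v k) ^ 2 = α * S := by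
    rw [← Finset.sum_subset hsub (fun k _ hk => by rw [extendE_zero' N v k hk]; ring),
      hSdef, Finset.mul_sum]
  have hterm : ∀ k ∈ Finset.Icc (1 - (n : ℤ)) (N : ℤ),
      (1 / 2 : ℝ) * pmin * (D k) ^ 2 - (α * (extendE N v k) ^ 2 + B k)
        ≤ (1 / 2 : ℝ) * p k * (D k) ^ 2 - F k (extendE N v k) := by
    intro k hk
    have h1 := hp k hk
    have h2 := hB k v
    nlinarith [sq_nonneg (D k)]
  have hsum := Finset.sum_le_sum hterm
  have hLHS : ∑ k ∈ Finset.Icc (1 - (n : ℤ)) (N : ℤ),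
      ((1 / 2 : ℝ) * pmin * (D k) ^ 2 - (α * (extendE N v k) ^ 2 + B k))
      = (1 / 2 : ℝ) * pmin * T - (α * S + C0) := by
    rw [Finset.sum_sub_distrib, Finset.sum_add_distrib, hxsum, ← Finset.mul_sum, ← hT, ← hC0]
  have hJ : (1 / 2 : ℝ) * pmin * T - (α * S + C0) ≤ Jfun n N p F v := by
    rw [← hLHS]
    exact hsum
  have : c * S - C0 ≤ Jfun n N p F v := by
    have : (c + α) * S ≤ (1 / 2 : ℝ) * pmin * T := by
      have : (1 / 2 : ℝ) * pmin * (lam * S) ≤ (1 / 2 : ℝ) * pmin * T :=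
        mul_le_mul_of_nonneg_left hTS (by linarith)
      calc (c + α) * S = (1 / 2 : ℝ) * pmin * (lam * S) := by rw [hcdef]; ring
      _ ≤ (1 / 2 : ℝ) * pmin * T := this
    have hexp : (c + α) * S = c * S + α * S := by ring
    linarith
  linarith
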